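/- arXiv:1109.2168 — 3 statements merged into one kernel-verified Lean document; each statement's English description precedes it below -/
import Mathlib

section
/- Let C be a vector space over the field 𝔽₂ with two elements, and let ∂, Φ, Ψ, c, U, U′ : C → C be 𝔽₂-linear maps satisfying: ∂∘∂ = 0; U and U′ each commute with ∂, with Φ and with Ψ; ∂∘Φ = Φ∘∂; ∂∘Ψ + Ψ∘∂ = U + U′; Φ∘Φ = 0; ∂∘c + c∘∂ = (U + U′)∘c∘Φ; c∘U = U′∘c; and c∘U′ = U′∘c. Then the map f := c∘Φ∘Ψ satisfies ∂∘f = f∘∂ (it is a chain map) and f∘U = U′∘f. -/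
/-- The algebraic content of the fact that `f_{j,j'} = c ∘ Φ ∘ Ψ` is an
`𝔽₂[U₁,…,U_l]`-equivariant chain map between grid complexes with different
special basepoints. -/
theorem basepoint_change_chain_map
    {C : Type*} [AddCommGroup C] [Module (ZMod 2) C]
    (d Φ Ψ c U U' : C →ₗ[ZMod 2] C)
    (hd : d ∘ₗ d = 0)
    (hUd : U ∘ₗ d = d ∘ₗ U) (hUΦ : U ∘ₗ Φ = Φ ∘ₗ U) (hUΨ : U ∘ₗ Ψ = Ψ ∘ₗ U)
    (hU'd : U' ∘ₗ d = d ∘ₗ U') (hU'Φ : U' ∘ₗ Φ = Φ ∘ₗ U') (hU'Ψ : U' ∘ₗ Ψ = Ψ ∘ₗ U')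
    (hΦ : d ∘ₗ Φ = Φ ∘ₗ d)
    (hΨ : d ∘ₗ Ψ + Ψ ∘ₗ d = U + U')
    (hΦ2 : Φ ∘ₗ Φ = 0)
    (hc : d ∘ₗ c + c ∘ₗ d = (U + U') ∘ₗ c ∘ₗ Φ)
    (hcU : c ∘ₗ U = U' ∘ₗ c)
    (hcU' : c ∘ₗ U' = U' ∘ₗ c) :
    d ∘ₗ (c ∘ₗ Φ ∘ₗ Ψ) = (c ∘ₗ Φ ∘ₗ Ψ) ∘ₗ d ∧
    (c ∘ₗ Φ ∘ₗ Ψ) ∘ₗ U = U' ∘ₗ (c ∘ₗ Φ ∘ₗ Ψ) := by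
  simp only [← Module.End.mul_eq_comp] at *
  have h2 : ∀ x : C →ₗ[ZMod 2] C, x + x = 0 := by
    intro x
    have : (2 : ZMod 2) • x = 0 := by
      rw [show (2 : ZMod 2) = 0 by decide, zero_smul]
    simpa [two_smul] using this
  -- e1 : d * c = c * d + (U + U') * c * Φ
  have e1 : d * c = (U + U') * (c * Φ) + c * d := by
    have h : d * c + (c * d + c * d) = (U + U') * (c * Φ) + c * d := by
      rw [← add_assoc, hc]
    simpa [h2] using h
  -- e2 : d * Ψ = Ψ * d + (U + U')
  have e2 : d * Ψ = (U + U') + Ψ * d := by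
    have h : d * Ψ + (Ψ * d + Ψ * d) = (U + U') + Ψ * d := by
      rw [← add_assoc, hΨ]
    simpa [h2] using h
  constructor
  · calc d * (c * (Φ * Ψ)) = (d * c) * (Φ * Ψ) := by noncomm_ring
    _ = ((U + U') * (c * Φ) + c * d) * (Φ * Ψ) := by rw [e1]
    _ = c * (d * Φ) * Ψ + (U + U') * c * (Φ * Φ) * Ψ := by noncomm_ring
    _ = c * (Φ * d) * Ψ + (U + U') * c * (0 : C →ₗ[ZMod 2] C) * Ψ := by rw [hΦ, hΦ2]
    _ = c * Φ * (d * Ψ) := by noncomm_ring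
    _ = c * Φ * ((U + U') + Ψ * d) := by rw [e2]
    _ = c * (Φ * Ψ) * d + c * (Φ * U) + c * (Φ * U') := by noncomm_ring
    _ = c * (Φ * Ψ) * d + c * (U * Φ) + c * (U' * Φ) := by rw [hUΦ, hU'Φ]
    _ = c * (Φ * Ψ) * d + (c * U) * Φ + (c * U') * Φ := by noncomm_ring
    _ = c * (Φ * Ψ) * d + U' * c * Φ + U' * c * Φ := by rw [hcU, hcU']
    _ = c * (Φ * Ψ) * d + (U' * c * Φ + U' * c * Φ) := by noncomm_ring
    _ = c * (Φ * Ψ) * d := by rw [h2]; noncomm_ring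
  · calc c * (Φ * Ψ) * U = c * Φ * (Ψ * U) := by noncomm_ring
    _ = c * Φ * (U * Ψ) := by rw [← hUΨ]
    _ = c * (Φ * U) * Ψ := by noncomm_ring
    _ = c * (U * Φ) * Ψ := by rw [hUΦ]
    _ = (c * U) * (Φ * Ψ) := by noncomm_ring
    _ = (U' * c) * (Φ * Ψ) := by rw [hcU]
    _ = U' * (c * (Φ * Ψ)) := by noncomm_ring
end

section
/- Let r̃, r̃′ be Laurent polynomials in ℤ[v,v⁻¹] and let m, m′ be natural numbers. If (1 + v + ⋯ + v^{2m}) + (v⁻¹ + 2 + v)·r̃(v) = (1 + v + ⋯ + v^{2m′}) + (v⁻¹ + 2 + v)·r̃′(v) in ℤ[v,v⁻¹], then m = m′ and r̃ = r̃′. -/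
open LaurentPolynomial

noncomputable def negOneEval : LaurentPolynomial ℤ →+* ℤ :=
  AddMonoidAlgebra.liftNCRingHom (RingHom.id ℤ)
    ((Units.coeHom ℤ).comp (zpowersHom ℤˣ (-1))) (fun _ _ => Commute.all _ _)

lemma negOneEval_T (n : ℤ) : negOneEval (T n) = (((-1 : ℤˣ)^n : ℤˣ) : ℤ) := by
  have h1 : negOneEval (T n)
      = (RingHom.id ℤ) 1 * ((Units.coeHom ℤ).comp (zpowersHom ℤˣ (-1))) (Multiplicative.ofAdd n) :=
    AddMonoidAlgebra.liftNC_single _ _ _ _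
  rw [h1]; simp

lemma negOneEval_T_even (j : ℕ) : negOneEval (T (2*(j:ℤ))) = 1 := by
  rw [negOneEval_T, zpow_mul]
  have h2 : ((-1:ℤˣ)^(2:ℤ)) = 1 := by decide
  rw [h2, one_zpow]; rfl

lemma negOneEval_T_odd (m : ℕ) : negOneEval (T (2*(m:ℤ)+1)) = -1 := by
  rw [negOneEval_T, zpow_add, zpow_mul]
  have h2 : ((-1:ℤˣ)^(2:ℤ)) = 1 := by decide
  rw [h2, one_zpow, zpow_one]; rfl

lemma negOneEval_T_one : negOneEval (T 1) = -1 := by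
  rw [negOneEval_T, zpow_one]; rfl

lemma negOneEval_T_negone : negOneEval (T (-1)) = -1 := by
  rw [negOneEval_T]
  have h2 : ((-1:ℤˣ)^(-1:ℤ)) = -1 := by decide
  rw [h2]; rfl

lemma sum_double (k : ℕ) :
    ∑ i ∈ Finset.range (2*k), (T (i:ℤ) : LaurentPolynomial ℤ)
      = (1 + T 1) * ∑ j ∈ Finset.range k, T (2*(j:ℤ)) := by
  induction k with
  | zero => simp
  | succ k ih =>
    have h2 : 2*(k+1) = 2*k + 1 + 1 := by ring
    rw [h2, Finset.sum_range_succ, Finset.sum_range_succ, ih, Finset.sum_range_succ]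
    have e1 : (T ((2*k+1 : ℕ) : ℤ) : LaurentPolynomial ℤ) = T (2*(k:ℤ)) * T 1 := by
      push_cast
      rw [← T_add]
    have e2 : (T ((2*k : ℕ) : ℤ) : LaurentPolynomial ℤ) = T (2*(k:ℤ)) := by push_cast; ring_nf
    rw [e1, e2]
    ring

noncomputable def oneEval : LaurentPolynomial ℤ →+* ℤ :=
  AddMonoidAlgebra.liftNCRingHom (RingHom.id ℤ) 1 (fun _ _ => Commute.all _ _)

lemma oneEval_T (n : ℤ) : oneEval (T n) = 1 := by
  have h1 : oneEval (T n)
      = (RingHom.id ℤ) 1 * (1 : Multiplicative ℤ →* ℤ) (Multiplicative.ofAdd n) :=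
    AddMonoidAlgebra.liftNC_single _ _ _ _
  rw [h1]; simp

lemma oneAddT_ne : (1 + T 1 : LaurentPolynomial ℤ) ≠ 0 := by
  intro hc
  have := congrArg oneEval hc
  simp [oneEval_T] at this

lemma hA_factor : (T (-1) + 2 + T 1 : LaurentPolynomial ℤ) = T (-1) * (1 + T 1)^2 := by
  have h1 : (T (-1) * T 1 : LaurentPolynomial ℤ) = 1 := by
    rw [← T_add]; norm_num
  have h2 : (T (-1) * (T 1 * T 1) : LaurentPolynomial ℤ) = T 1 := by
    rw [← T_add, ← T_add]; norm_num
  linear_combination -2*h1 - h2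

lemma hA_ne : (T (-1) + 2 + T 1 : LaurentPolynomial ℤ) ≠ 0 := by
  rw [hA_factor]
  exact mul_ne_zero (isUnit_T (-1)).ne_zero (pow_ne_zero 2 oneAddT_ne)

lemma key (r r' : LaurentPolynomial ℤ) (m m' : ℕ) (hle : m ≤ m')
    (h : (∑ i ∈ Finset.range (2 * m + 1), (T i : LaurentPolynomial ℤ))
          + (T (-1) + 2 + T 1) * r
        = (∑ i ∈ Finset.range (2 * m' + 1), (T i : LaurentPolynomial ℤ))
          + (T (-1) + 2 + T 1) * r') :
    m = m' ∧ r = r' := by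
  set k := m' - m with hk
  have hm' : 2*m' + 1 = (2*m+1) + 2*k := by omega
  have hsplit : ∑ i ∈ Finset.range (2*m'+1), (T (i:ℤ) : LaurentPolynomial ℤ)
      = ∑ i ∈ Finset.range (2*m+1), T (i:ℤ)
        + T (2*(m:ℤ)+1) * ∑ i ∈ Finset.range (2*k), T (i:ℤ) := by
    rw [hm', Finset.sum_range_add, Finset.mul_sum]
    congr 1
    refine Finset.sum_congr rfl fun i _ => ?_
    push_cast
    rw [← T_add]
  have hmain : (T (-1) + 2 + T 1 : LaurentPolynomial ℤ) * (r - r')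
      = T (2*(m:ℤ)+1) * ((1 + T 1) * ∑ j ∈ Finset.range k, T (2*(j:ℤ))) := by
    rw [← sum_double]
    linear_combination h + hsplit
  have hcancel : (1 + T 1 : LaurentPolynomial ℤ)
      * (T (-1) * (1 + T 1) * (r - r') - T (2*(m:ℤ)+1) * ∑ j ∈ Finset.range k, T (2*(j:ℤ))) = 0 := by
    linear_combination hmain - (r - r') * hA_factor
  have hz : (T (-1) * (1 + T 1) * (r - r') : LaurentPolynomial ℤ)
      = T (2*(m:ℤ)+1) * ∑ j ∈ Finset.range k, T (2*(j:ℤ)) := by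
    rcases mul_eq_zero.mp hcancel with h' | h'
    · exact absurd h' oneAddT_ne
    · exact sub_eq_zero.mp h'
  have hev := congrArg negOneEval hz
  simp only [map_mul, map_add, map_one, map_sum, negOneEval_T_even, negOneEval_T_odd,
    negOneEval_T_one, negOneEval_T_negone, Finset.sum_const, Finset.card_range,
    nsmul_eq_mul, mul_one] at hev
  have hk0 : k = 0 := by
    have : (k : ℤ) = 0 := by linarith
    exact_mod_cast this
  have hmm : m = m' := by omega
  refine ⟨hmm, ?_⟩
  rw [hk0] at hmain
  simp only [Finset.range_zero, Finset.sum_empty, mul_zero] at hmain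
  have := mul_eq_zero.mp hmain
  rcases this with h' | h'
  · exact absurd h' hA_ne
  · exact sub_eq_zero.mp h'

/-- Uniqueness in Theorem 5.1: the decomposition
`(1 + v + ⋯ + v^{2m}) + (v⁻¹ + 2 + v)·r̃(v)` of a Laurent polynomial determines both `m`
and `r̃`. -/
theorem ladder_decomposition_unique
    (r r' : LaurentPolynomial ℤ) (m m' : ℕ)
    (h : (∑ i ∈ Finset.range (2 * m + 1), (T i : LaurentPolynomial ℤ))
          + (T (-1) + 2 + T 1) * r
        = (∑ i ∈ Finset.range (2 * m' + 1), (T i : LaurentPolynomial ℤ))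
          + (T (-1) + 2 + T 1) * r') :
    m = m' ∧ r = r' := by
  rcases le_total m m' with hle | hle
  · exact key r r' m m' hle h
  · obtain ⟨h1, h2⟩ := key r' r m' m hle h.symm
    exact ⟨h1.symm, h2.symm⟩
end

section
/- Let m, m′ be natural numbers. If (1+v)² divides v^{2m} − v^{2m′} in the polynomial ring ℤ[v], then m = m′. -/
open Polynomial

/-- If `(1+X)²` divides `X^{2m} − X^{2m'}` in `ℤ[X]`, then `m = m'`. -/
theorem eq_of_one_add_X_sq_dvd
    (m m' : ℕ)
    (h : (1 + X : ℤ[X]) ^ 2 ∣ (X : ℤ[X]) ^ (2 * m) - X ^ (2 * m')) :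
    m = m' := by
  obtain ⟨q, hq⟩ := h
  have h2 := congrArg (fun p => Polynomial.eval (-1 : ℤ) (derivative p)) hq
  simp [derivative_pow, derivative_mul, mul_comm] at h2
  have hm : ∀ k : ℕ, (k : ℤ) * 2 * (-1) ^ (k * 2 - 1) = -(2 * k) := by
    intro k
    rcases Nat.eq_zero_or_pos k with hk | hk
    · simp [hk]
    · rw [Odd.neg_one_pow ⟨k - 1, by omega⟩]; ring
  rw [hm m, hm m'] at h2
  omega
end
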